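/- If G is a finite group and H is a proper subgroup of G, then there exists a conjugacy class of G that is disjoint from H. Equivalently, the union of all conjugates gHg⁻¹ for g in G is a proper subset of G. -/

import Mathlib

open Finset

/-- **Jordan's lemma.** In a finite group `G`, if `H` is a proper subgroup,
then some conjugacy class of `G` is disjoint from `H`: there is an element
`x ∈ G` none of whose conjugates lies in `H`. -/
theorem jordan_lemma {G : Type*} [Group G] [Fintype G] (H : Subgroup G)
    (hH : H ≠ ⊤) : ∃ x : G, ∀ g : G, g * x * g⁻¹ ∉ H := by
  classical
  by_contra hc
  push_neg at hc
  set N := Subgroup.normalizer (H : Set G) with hN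
  haveI : Fintype (G ⧸ N) := Fintype.ofFinite _
  -- the conjugate g H g⁻¹ as a finset
  set F : G → Finset G := fun g => Finset.univ.filter (fun x => g⁻¹ * x * g ∈ H) with hF
  have memF : ∀ g x, x ∈ F g ↔ g⁻¹ * x * g ∈ H := by
    intro g x; simp [hF]
  have oneF : ∀ g, (1 : G) ∈ F g := by
    intro g; rw [memF]; simpa using H.one_mem
  have cardF : ∀ g, (F g).card = Nat.card H := by
    intro g
    rw [Nat.card_eq_fintype_card, Fintype.card_subtype]
    apply Finset.card_bij (fun x _ => g⁻¹ * x * g)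
    · intro a ha; simp only [hF, mem_filter, mem_univ, true_and] at ha ⊢; exact ha
    · intro a ha b hb hab
      have : a = b := by
        have := mul_right_cancel hab
        exact mul_left_cancel this
      exact this
    · intro b hb
      refine ⟨g * b * g⁻¹, ?_, by group⟩
      rw [memF]
      simp only [mem_filter, mem_univ, true_and] at hb
      convert hb using 1; group
  -- conjugation by an element of the normalizer fixes F
  have Fnorm : ∀ (a n : G), n ∈ N → F (a * n) = F a := by
    intro a n hn
    ext x
    rw [memF, memF]
    have h1 : (a * n)⁻¹ * x * (a * n) = n⁻¹ * (a⁻¹ * x * a) * n := by group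
    rw [h1]
    exact (Subgroup.mem_normalizer_iff''.mp hn (a⁻¹ * x * a)).symm
  have Fout : ∀ a : G, F ((Quotient.mk'' a : G ⧸ N).out) = F a := by
    intro a
    have h : (Quotient.mk'' ((Quotient.mk'' a : G ⧸ N).out) : G ⧸ N) = Quotient.mk'' a :=
      Quotient.out_eq' _
    have h2 : a⁻¹ * (Quotient.mk'' a : G ⧸ N).out ∈ N :=
      QuotientGroup.leftRel_apply.mp (Quotient.eq''.mp h.symm)
    have h3 : (Quotient.mk'' a : G ⧸ N).out = a * (a⁻¹ * (Quotient.mk'' a : G ⧸ N).out) := by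
      group
    rw [h3, Fnorm _ _ h2]
  -- covering
  have cover : (Finset.univ : Finset G) ⊆
      insert 1 ((Finset.univ : Finset (G ⧸ N)).biUnion (fun c => F c.out \ {1})) := by
    intro x _
    rcases eq_or_ne x 1 with rfl | hx
    · exact mem_insert_self _ _
    · obtain ⟨g, hg⟩ := hc x
      refine mem_insert_of_mem (mem_biUnion.mpr ⟨Quotient.mk'' g⁻¹, mem_univ _, ?_⟩)
      rw [mem_sdiff, Fout, memF]
      refine ⟨by simpa using hg, by simpa using hx⟩
  have hcardH : 1 ≤ Nat.card H := Nat.one_le_iff_ne_zero.mpr Nat.card_pos.ne'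
  have cardSdiff : ∀ g : G, (F g \ {1}).card = Nat.card H - 1 := by
    intro g
    rw [card_sdiff_of_subset (by simpa using oneF g), cardF]
    simp
  have hbound : Fintype.card G ≤ 1 + N.index * (Nat.card H - 1) := by
    calc Fintype.card G = (Finset.univ : Finset G).card := (card_univ).symm
    _ ≤ (insert 1 ((Finset.univ : Finset (G ⧸ N)).biUnion (fun c => F c.out \ {1}))).card :=
        Finset.card_le_card cover
    _ ≤ 1 + ((Finset.univ : Finset (G ⧸ N)).biUnion (fun c => F c.out \ {1})).card :=
        by rw [Nat.add_comm]; exact card_insert_le _ _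
    _ ≤ 1 + ∑ c : G ⧸ N, (F c.out \ {1}).card := by
        exact Nat.add_le_add_left (Finset.card_biUnion_le) 1
    _ = 1 + Fintype.card (G ⧸ N) * (Nat.card H - 1) := by
        simp [cardSdiff, Finset.sum_const, mul_comm, Nat.card_eq_fintype_card]
    _ = 1 + N.index * (Nat.card H - 1) := by
        simp [Subgroup.index, Nat.card_eq_fintype_card]
  have hNle : N.index ≤ H.index := by
    have hdvd : N.index ∣ H.index := Subgroup.index_dvd_of_le (Subgroup.le_normalizer (H := H))
    exact Nat.le_of_dvd (Nat.pos_of_ne_zero (Subgroup.index_ne_zero_of_finite)) hdvd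
  have htot : H.index * Nat.card H = Nat.card G := Subgroup.index_mul_card H
  have hmul : H.index * (Nat.card H - 1) = H.index * Nat.card H - H.index := by
    rw [Nat.mul_sub, mul_one]
  have hindex2 : 2 ≤ H.index := by
    have h0 : H.index ≠ 0 := Subgroup.index_ne_zero_of_finite
    have h1 : H.index ≠ 1 := fun e => hH (Subgroup.index_eq_one.mp e)
    omega
  have hG : Nat.card G = Fintype.card G := Nat.card_eq_fintype_card
  have hge : H.index ≤ Nat.card G := htot ▸ Nat.le_mul_of_pos_right _ hcardH
  have key : Fintype.card G ≤ 1 + (Nat.card G - H.index) := by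
    calc Fintype.card G ≤ 1 + N.index * (Nat.card H - 1) := hbound
    _ ≤ 1 + H.index * (Nat.card H - 1) := by gcongr
    _ = 1 + (H.index * Nat.card H - H.index) := by rw [hmul]
    _ = 1 + (Nat.card G - H.index) := by rw [htot]
  omega
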